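/- Let a, σ ≥ 0 be real numbers and let ω = e^{2πi/3}. For a real c ≥ 0 and a Boolean flag φ, let R(c, φ) be the multiset of complex numbers {c^{1/3}, c^{1/3}, c^{1/3}} if φ is true, and {c^{1/3}, c^{1/3}·ω, c^{1/3}·ω²} if φ is false. For any flags f, g, let λ_1, …, λ_6 be the six elements of the multiset R(a, f) ∪ R(σ, g) listed so that the real parts are nonincreasing and, among elements with equal real part, the imaginary parts are nonincreasing. Then a = σ if and only if at least one of the following holds: (i) λ_1 = λ_2 = λ_3 = λ_4 = λ_5 = λ_6; (ii) λ_1 = λ_2 = λ_3 = λ_4, λ_4 ≠ λ_5, and λ_5 ≠ λ_6; (iii) λ_1 = λ_2, λ_2 ≠ λ_3, λ_3 = λ_4, λ_4 ≠ λ_5, and λ_5 = λ_6. -/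

import Mathlib

set_option autoImplicit false

/-- `R(c, φ)`: for `c ≥ 0`, the multiset of three complex numbers which is three copies
of the nonnegative real cube root `c^{1/3}` if `φ` is true, and the three complex cube
roots `c^{1/3}, c^{1/3}·ω, c^{1/3}·ω²` (with `ω = e^{2πi/3}`) if `φ` is false. -/
noncomputable def cubeRootMultiset (c : ℝ) (φ : Bool) : Multiset ℂ :=
  if φ then
    {((c ^ ((1 : ℝ) / 3) : ℝ) : ℂ), ((c ^ ((1 : ℝ) / 3) : ℝ) : ℂ),
      ((c ^ ((1 : ℝ) / 3) : ℝ) : ℂ)}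
  else
    {((c ^ ((1 : ℝ) / 3) : ℝ) : ℂ),
      ((c ^ ((1 : ℝ) / 3) : ℝ) : ℂ) * Complex.exp (2 * (Real.pi : ℂ) * Complex.I / 3),
      ((c ^ ((1 : ℝ) / 3) : ℝ) : ℂ) * Complex.exp (2 * (Real.pi : ℂ) * Complex.I / 3) ^ 2}

namespace CubeRootAux

/-- The primitive cube root of unity used in the statement. -/
noncomputable def ww : ℂ := Complex.exp (2 * (Real.pi : ℂ) * Complex.I / 3)

lemma ww_re : ww.re = -(1/2) := by
  have h : (2 * (Real.pi : ℂ) * Complex.I / 3) = ((2*Real.pi/3 : ℝ):ℂ) * Complex.I := by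
    push_cast; ring
  rw [ww, h, Complex.exp_ofReal_mul_I_re]
  have : 2*Real.pi/3 = Real.pi - Real.pi/3 := by ring
  rw [this, Real.cos_pi_sub, Real.cos_pi_div_three]

lemma ww_im : ww.im = Real.sqrt 3 / 2 := by
  have h : (2 * (Real.pi : ℂ) * Complex.I / 3) = ((2*Real.pi/3 : ℝ):ℂ) * Complex.I := by
    push_cast; ring
  rw [ww, h, Complex.exp_ofReal_mul_I_im]
  have : 2*Real.pi/3 = Real.pi - Real.pi/3 := by ring
  rw [this, Real.sin_pi_sub, Real.sin_pi_div_three]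

lemma sqrt3_mul : Real.sqrt 3 * Real.sqrt 3 = 3 :=
  Real.mul_self_sqrt (by norm_num)

lemma sqrt3_pos : 0 < Real.sqrt 3 := Real.sqrt_pos.mpr (by norm_num)

lemma ww2_re : (ww^2).re = -(1/2) := by
  rw [sq, Complex.mul_re, ww_re, ww_im]
  nlinarith [sqrt3_mul]

lemma ww2_im : (ww^2).im = -(Real.sqrt 3 / 2) := by
  rw [sq, Complex.mul_im, ww_re, ww_im]; ring

lemma tw_re (t : ℝ) : ((t:ℂ) * ww).re = -(t/2) := by
  rw [Complex.mul_re, Complex.ofReal_re, Complex.ofReal_im, ww_re]; ring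

lemma tw_im (t : ℝ) : ((t:ℂ) * ww).im = t * Real.sqrt 3 / 2 := by
  rw [Complex.mul_im, Complex.ofReal_re, Complex.ofReal_im, ww_im]; ring

lemma tw2_re (t : ℝ) : ((t:ℂ) * ww^2).re = -(t/2) := by
  rw [Complex.mul_re, Complex.ofReal_re, Complex.ofReal_im, ww2_re]; ring

lemma tw2_im (t : ℝ) : ((t:ℂ) * ww^2).im = -(t * Real.sqrt 3 / 2) := by
  rw [Complex.mul_im, Complex.ofReal_re, Complex.ofReal_im, ww2_im]; ring

/-- The sorting relation: nonincreasing real parts, ties broken by nonincreasing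
imaginary parts. -/
def r (x y : ℂ) : Prop := y.re < x.re ∨ (y.re = x.re ∧ y.im ≤ x.im)

lemma r_antisymm : ∀ x y : ℂ, r x y → r y x → x = y := by
  intro x y hxy hyx
  apply Complex.ext <;> rcases hxy with h | ⟨h1,h2⟩ <;> rcases hyx with h' | ⟨h1',h2'⟩ <;> linarith

lemma r_trans : Transitive r := by
  intro x y z hxy hyz
  rcases hxy with h | ⟨h1, h2⟩ <;> rcases hyz with h' | ⟨h1', h2'⟩
  · exact Or.inl (h'.trans h)
  · exact Or.inl (h1' ▸ h)
  · exact Or.inl (h1 ▸ h')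
  · exact Or.inr ⟨h1'.trans h1, h2'.trans h2⟩

lemma r_refl (x : ℂ) : r x x := Or.inr ⟨rfl, le_rfl⟩

lemma r_real_real {t s : ℝ} (h : s ≤ t) : r (t:ℂ) (s:ℂ) := by
  rcases eq_or_lt_of_le h with h | h
  · exact Or.inr ⟨by simp [h], by simp⟩
  · exact Or.inl (by simpa using h)

lemma r_real_w {t s : ℝ} (h : -(s/2) < t) : r (t:ℂ) ((s:ℂ) * ww) := by
  exact Or.inl (by rw [tw_re, Complex.ofReal_re]; exact h)

lemma r_w_w2 {t : ℝ} (h : 0 ≤ t) : r ((t:ℂ) * ww) ((t:ℂ) * ww^2) := by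
  refine Or.inr ⟨by rw [tw_re, tw2_re], ?_⟩
  rw [tw_im, tw2_im]
  nlinarith [sqrt3_pos]

lemma r_w2_w {s t : ℝ} (h : s < t) : r ((s:ℂ) * ww^2) ((t:ℂ) * ww) := by
  refine Or.inl ?_
  rw [tw_re, tw2_re]; linarith

lemma ne_real_w {t s : ℝ} (hs : 0 < s) : (t:ℂ) ≠ (s:ℂ) * ww := by
  intro h
  have := congrArg Complex.im h
  rw [Complex.ofReal_im, tw_im] at this
  nlinarith [sqrt3_pos]

lemma ne_w_w2 {s : ℝ} (hs : 0 < s) : (s:ℂ) * ww ≠ (s:ℂ) * ww^2 := by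
  intro h
  have := congrArg Complex.im h
  rw [tw_im, tw2_im] at this
  nlinarith [sqrt3_pos]

lemma sorted_eq (lam : Fin 6 → ℂ) (L : List ℂ)
    (hm : (Finset.univ.val.map lam : Multiset ℂ) = (L : Multiset ℂ))
    (hs : ∀ i j : Fin 6, i ≤ j → r (lam i) (lam j))
    (hL : L.Chain' r) : List.ofFn lam = L := by
  haveI : IsAntisymm ℂ r := ⟨r_antisymm⟩
  haveI : IsTrans ℂ r := ⟨fun a b c hab hbc => r_trans hab hbc⟩
  have hp : (List.ofFn lam).Perm L := by
    rw [← Multiset.coe_eq_coe, ← Fin.univ_val_map, hm]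
  refine List.Perm.eq_of_pairwise (fun a b _ _ => r_antisymm a b) ?_ (List.isChain_iff_pairwise.mp hL) hp
  rw [List.pairwise_ofFn]
  intro i j hij; exact hs i j hij.le

lemma lam_eq (lam : Fin 6 → ℂ) (c0 c1 c2 c3 c4 c5 : ℂ) (M : Multiset ℂ)
    (hm : Finset.univ.val.map lam = M)
    (hM : M = (↑[c0,c1,c2,c3,c4,c5] : Multiset ℂ))
    (hs : ∀ i j : Fin 6, i ≤ j → r (lam i) (lam j))
    (hc : List.Chain' r [c0,c1,c2,c3,c4,c5]) :
    lam 0 = c0 ∧ lam 1 = c1 ∧ lam 2 = c2 ∧ lam 3 = c3 ∧ lam 4 = c4 ∧ lam 5 = c5 := by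
  have h := sorted_eq lam [c0,c1,c2,c3,c4,c5] (hm.trans hM) hs hc
  have h' : [lam 0, lam 1, lam 2, lam 3, lam 4, lam 5] = [c0,c1,c2,c3,c4,c5] := h
  simp only [List.cons.injEq, and_true] at h'
  exact h'

lemma crm_true (c : ℝ) :
    cubeRootMultiset c true =
      ({((c ^ ((1 : ℝ) / 3) : ℝ) : ℂ), ((c ^ ((1 : ℝ) / 3) : ℝ) : ℂ),
        ((c ^ ((1 : ℝ) / 3) : ℝ) : ℂ)} : Multiset ℂ) := rfl

lemma crm_false (c : ℝ) :
    cubeRootMultiset c false =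
      ({((c ^ ((1 : ℝ) / 3) : ℝ) : ℂ),
        ((c ^ ((1 : ℝ) / 3) : ℝ) : ℂ) * ww,
        ((c ^ ((1 : ℝ) / 3) : ℝ) : ℂ) * ww^2} : Multiset ℂ) := rfl

/-- The pattern predicate on λ. -/
def Pat (lam : Fin 6 → ℂ) : Prop :=
  ((lam 0 = lam 1 ∧ lam 1 = lam 2 ∧ lam 2 = lam 3 ∧ lam 3 = lam 4 ∧ lam 4 = lam 5) ∨
   (lam 0 = lam 1 ∧ lam 1 = lam 2 ∧ lam 2 = lam 3 ∧ lam 3 ≠ lam 4 ∧ lam 4 ≠ lam 5) ∨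
   (lam 0 = lam 1 ∧ lam 1 ≠ lam 2 ∧ lam 2 = lam 3 ∧ lam 3 ≠ lam 4 ∧ lam 4 = lam 5))

lemma pattern_of_eq (a : ℝ) (ha : 0 ≤ a) (f g : Bool) (lam : Fin 6 → ℂ)
    (hmulti : Finset.univ.val.map lam = cubeRootMultiset a f + cubeRootMultiset a g)
    (hs : ∀ i j : Fin 6, i ≤ j → r (lam i) (lam j)) : Pat lam := by
  set A : ℝ := a ^ ((1 : ℝ) / 3) with hA
  have hA0 : 0 ≤ A := Real.rpow_nonneg ha _
  rcases eq_or_lt_of_le hA0 with hA0' | hApos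
  · -- A = 0 : all six entries are 0
    have hz : (A:ℂ) = 0 := by rw [← hA0']; norm_num
    have hM : cubeRootMultiset a f + cubeRootMultiset a g = (↑[(0:ℂ),0,0,0,0,0] : Multiset ℂ) := by
      cases f <;> cases g <;>
        simp only [crm_true, crm_false, ← hA, hz, zero_mul] <;> rfl
    obtain ⟨h0,h1,h2,h3,h4,h5⟩ := lam_eq lam 0 0 0 0 0 0 _ hmulti hM hs (by
      simp only [List.Chain', List.isChain_cons_cons, List.isChain_singleton, and_true]
      exact ⟨r_refl _, r_refl _, r_refl _, r_refl _, r_refl _⟩)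
    left
    rw [h0,h1,h2,h3,h4,h5]
    simp
  · -- A > 0
    cases f <;> cases g
    · -- false false : [A, A, Aw, Aw, Aw2, Aw2]
      obtain ⟨h0,h1,h2,h3,h4,h5⟩ := lam_eq lam (A:ℂ) (A:ℂ) ((A:ℂ)*ww) ((A:ℂ)*ww)
          ((A:ℂ)*ww^2) ((A:ℂ)*ww^2) _ hmulti (by
        simp only [crm_false, ← hA]
        show (↑[(A:ℂ), (A:ℂ)*ww, (A:ℂ)*ww^2, (A:ℂ), (A:ℂ)*ww, (A:ℂ)*ww^2] : Multiset ℂ) = _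
        simp only [← Multiset.cons_coe, Multiset.coe_nil, ← Multiset.singleton_add]
        abel) hs (by
        simp only [List.Chain', List.isChain_cons_cons, List.isChain_singleton, and_true]
        exact ⟨r_real_real le_rfl, r_real_w (by linarith), r_refl _, r_w_w2 hA0, r_refl _⟩)
      right; right
      rw [h0,h1,h2,h3,h4,h5]
      exact ⟨rfl, (ne_real_w hApos), rfl, ne_w_w2 hApos, rfl⟩
    · -- false true : [A, A, A, A, Aw, Aw2]
      obtain ⟨h0,h1,h2,h3,h4,h5⟩ := lam_eq lam (A:ℂ) (A:ℂ) (A:ℂ) (A:ℂ)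
          ((A:ℂ)*ww) ((A:ℂ)*ww^2) _ hmulti (by
        simp only [crm_false, crm_true, ← hA]
        show (↑[(A:ℂ), (A:ℂ)*ww, (A:ℂ)*ww^2, (A:ℂ), (A:ℂ), (A:ℂ)] : Multiset ℂ) = _
        simp only [← Multiset.cons_coe, Multiset.coe_nil, ← Multiset.singleton_add]
        abel) hs (by
        simp only [List.Chain', List.isChain_cons_cons, List.isChain_singleton, and_true]
        exact ⟨r_real_real le_rfl, r_real_real le_rfl, r_real_real le_rfl,
          r_real_w (by linarith), r_w_w2 hA0⟩)
      right; left
      rw [h0,h1,h2,h3,h4,h5]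
      exact ⟨rfl, rfl, rfl, ne_real_w hApos, ne_w_w2 hApos⟩
    · -- true false : [A, A, A, A, Aw, Aw2]
      obtain ⟨h0,h1,h2,h3,h4,h5⟩ := lam_eq lam (A:ℂ) (A:ℂ) (A:ℂ) (A:ℂ)
          ((A:ℂ)*ww) ((A:ℂ)*ww^2) _ hmulti (by
        simp only [crm_false, crm_true, ← hA]
        show (↑[(A:ℂ), (A:ℂ), (A:ℂ), (A:ℂ), (A:ℂ)*ww, (A:ℂ)*ww^2] : Multiset ℂ) = _
        rfl) hs (by
        simp only [List.Chain', List.isChain_cons_cons, List.isChain_singleton, and_true]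
        exact ⟨r_real_real le_rfl, r_real_real le_rfl, r_real_real le_rfl,
          r_real_w (by linarith), r_w_w2 hA0⟩)
      right; left
      rw [h0,h1,h2,h3,h4,h5]
      exact ⟨rfl, rfl, rfl, ne_real_w hApos, ne_w_w2 hApos⟩
    · -- true true : [A,A,A,A,A,A]
      obtain ⟨h0,h1,h2,h3,h4,h5⟩ := lam_eq lam (A:ℂ) (A:ℂ) (A:ℂ) (A:ℂ) (A:ℂ) (A:ℂ) _ hmulti (by
        simp only [crm_true, ← hA]; rfl) hs (by
        simp only [List.Chain', List.isChain_cons_cons, List.isChain_singleton, and_true]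
        exact ⟨r_refl _, r_refl _, r_refl _, r_refl _, r_refl _⟩)
      left
      rw [h0,h1,h2,h3,h4,h5]
      simp

lemma not_pattern_of_lt (a σ : ℝ) (hσ : 0 ≤ σ) (hlt : σ < a) (f g : Bool) (lam : Fin 6 → ℂ)
    (hmulti : Finset.univ.val.map lam = cubeRootMultiset a f + cubeRootMultiset σ g)
    (hs : ∀ i j : Fin 6, i ≤ j → r (lam i) (lam j)) : ¬ Pat lam := by
  set A : ℝ := a ^ ((1 : ℝ) / 3) with hA
  set S : ℝ := σ ^ ((1 : ℝ) / 3) with hS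
  have hS0 : 0 ≤ S := Real.rpow_nonneg hσ _
  have hSA : S < A := Real.rpow_lt_rpow hσ hlt (by norm_num)
  have hApos : 0 < A := lt_of_le_of_lt hS0 hSA
  have hASne : (A:ℂ) ≠ (S:ℂ) := by
    simpa [Complex.ofReal_inj] using ne_of_gt hSA
  cases f <;> cases g
  · -- false false
    rcases eq_or_lt_of_le hS0 with hS0' | hSpos
    · -- S = 0 : [A, 0, 0, 0, Aw, Aw2]
      have hz : (S:ℂ) = 0 := by rw [← hS0']; norm_num
      obtain ⟨h0,h1,h2,h3,h4,h5⟩ := lam_eq lam (A:ℂ) 0 0 0 ((A:ℂ)*ww) ((A:ℂ)*ww^2) _ hmulti (by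
        simp only [crm_false, ← hA, ← hS, hz, zero_mul]
        show (↑[(A:ℂ), (A:ℂ)*ww, (A:ℂ)*ww^2, 0, 0, 0] : Multiset ℂ) = _
        simp only [← Multiset.cons_coe, Multiset.coe_nil, ← Multiset.singleton_add]
        abel) hs (by
        simp only [List.Chain', List.isChain_cons_cons, List.isChain_singleton, and_true]
        refine ⟨?_, r_refl _, r_refl _, ?_, r_w_w2 hApos.le⟩
        · exact Or.inl (by simpa using hApos)
        · have : r ((0:ℝ):ℂ) ((A:ℂ)*ww) := r_real_w (by linarith)
          simpa using this)
      have hne : lam 0 ≠ lam 1 := by rw [h0, h1]; simpa using ne_of_gt hApos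
      rintro (⟨h,_⟩|⟨h,_⟩|⟨h,_⟩) <;> exact hne h
    · -- S > 0 : [A, S, Sw, Sw2, Aw, Aw2]
      obtain ⟨h0,h1,h2,h3,h4,h5⟩ := lam_eq lam (A:ℂ) (S:ℂ) ((S:ℂ)*ww) ((S:ℂ)*ww^2)
          ((A:ℂ)*ww) ((A:ℂ)*ww^2) _ hmulti (by
        simp only [crm_false, ← hA, ← hS]
        show (↑[(A:ℂ), (A:ℂ)*ww, (A:ℂ)*ww^2, (S:ℂ), (S:ℂ)*ww, (S:ℂ)*ww^2] : Multiset ℂ) = _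
        simp only [← Multiset.cons_coe, Multiset.coe_nil, ← Multiset.singleton_add]
        abel) hs (by
        simp only [List.Chain', List.isChain_cons_cons, List.isChain_singleton, and_true]
        exact ⟨r_real_real hSA.le, r_real_w (by linarith), r_w_w2 hS0,
          r_w2_w hSA, r_w_w2 hApos.le⟩)
      have hne : lam 0 ≠ lam 1 := by rw [h0, h1]; exact hASne
      rintro (⟨h,_⟩|⟨h,_⟩|⟨h,_⟩) <;> exact hne h
  · -- false true : [A, S, S, S, Aw, Aw2]
    obtain ⟨h0,h1,h2,h3,h4,h5⟩ := lam_eq lam (A:ℂ) (S:ℂ) (S:ℂ) (S:ℂ)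
        ((A:ℂ)*ww) ((A:ℂ)*ww^2) _ hmulti (by
      simp only [crm_false, crm_true, ← hA, ← hS]
      show (↑[(A:ℂ), (A:ℂ)*ww, (A:ℂ)*ww^2, (S:ℂ), (S:ℂ), (S:ℂ)] : Multiset ℂ) = _
      simp only [← Multiset.cons_coe, Multiset.coe_nil, ← Multiset.singleton_add]
      abel) hs (by
      simp only [List.Chain', List.isChain_cons_cons, List.isChain_singleton, and_true]
      exact ⟨r_real_real hSA.le, r_real_real le_rfl, r_real_real le_rfl,
        r_real_w (by linarith), r_w_w2 hApos.le⟩)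
    have hne : lam 0 ≠ lam 1 := by rw [h0, h1]; exact hASne
    rintro (⟨h,_⟩|⟨h,_⟩|⟨h,_⟩) <;> exact hne h
  · -- true false
    rcases eq_or_lt_of_le hS0 with hS0' | hSpos
    · -- S = 0 : [A, A, A, 0, 0, 0]
      have hz : (S:ℂ) = 0 := by rw [← hS0']; norm_num
      obtain ⟨h0,h1,h2,h3,h4,h5⟩ := lam_eq lam (A:ℂ) (A:ℂ) (A:ℂ) 0 0 0 _ hmulti (by
        simp only [crm_false, crm_true, ← hA, ← hS, hz, zero_mul]
        rfl) hs (by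
        simp only [List.Chain', List.isChain_cons_cons, List.isChain_singleton, and_true]
        refine ⟨r_real_real le_rfl, r_real_real le_rfl, ?_, r_refl _, r_refl _⟩
        exact Or.inl (by simpa using hApos))
      have hne23 : lam 2 ≠ lam 3 := by
        rw [h2, h3]; simpa using ne_of_gt hApos
      have heq12 : lam 1 = lam 2 := by rw [h1, h2]
      have heq45 : lam 4 = lam 5 := by rw [h4, h5]
      rintro (⟨_,_,h,_⟩|⟨_,_,h,_⟩|⟨_,h,_⟩)
      · exact hne23 h
      · exact hne23 h
      · exact h heq12
    · -- S > 0 : [A, A, A, S, Sw, Sw2]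
      obtain ⟨h0,h1,h2,h3,h4,h5⟩ := lam_eq lam (A:ℂ) (A:ℂ) (A:ℂ) (S:ℂ)
          ((S:ℂ)*ww) ((S:ℂ)*ww^2) _ hmulti (by
        simp only [crm_false, crm_true, ← hA, ← hS]; rfl) hs (by
        simp only [List.Chain', List.isChain_cons_cons, List.isChain_singleton, and_true]
        exact ⟨r_real_real le_rfl, r_real_real le_rfl, r_real_real hSA.le,
          r_real_w (by linarith), r_w_w2 hS0⟩)
      have hne23 : lam 2 ≠ lam 3 := by rw [h2, h3]; exact hASne
      have heq12 : lam 1 = lam 2 := by rw [h1, h2]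
      rintro (⟨_,_,h,_⟩|⟨_,_,h,_⟩|⟨_,h,_⟩)
      · exact hne23 h
      · exact hne23 h
      · exact h heq12
  · -- true true : [A, A, A, S, S, S]
    obtain ⟨h0,h1,h2,h3,h4,h5⟩ := lam_eq lam (A:ℂ) (A:ℂ) (A:ℂ) (S:ℂ) (S:ℂ) (S:ℂ) _ hmulti (by
      simp only [crm_true, ← hA, ← hS]; rfl) hs (by
      simp only [List.Chain', List.isChain_cons_cons, List.isChain_singleton, and_true]
      exact ⟨r_real_real le_rfl, r_real_real le_rfl, r_real_real hSA.le,
        r_real_real le_rfl, r_real_real le_rfl⟩)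
    have hne23 : lam 2 ≠ lam 3 := by rw [h2, h3]; exact hASne
    have heq12 : lam 1 = lam 2 := by rw [h1, h2]
    rintro (⟨_,_,h,_⟩|⟨_,_,h,_⟩|⟨_,h,_⟩)
    · exact hne23 h
    · exact hne23 h
    · exact h heq12

end CubeRootAux

/-- Let `a, σ ≥ 0`, let `f, g` be Boolean flags, and let
`λ_1, …, λ_6` (here `lam 0, …, lam 5`) be the six elements of the multiset
`R(a, f) ∪ R(σ, g)` listed with nonincreasing real parts, ties broken by nonincreasing
imaginary parts. Then `a = σ` iff one of the three sorted equality patterns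
(i) `λ₁=λ₂=λ₃=λ₄=λ₅=λ₆`, (ii) `λ₁=λ₂=λ₃=λ₄, λ₄≠λ₅, λ₅≠λ₆`,
(iii) `λ₁=λ₂≠λ₃=λ₄≠λ₅=λ₆` holds. -/
theorem eq_iff_sorted_cube_root_pattern (a σ : ℝ) (ha : 0 ≤ a) (hσ : 0 ≤ σ)
    (f g : Bool) (lam : Fin 6 → ℂ)
    (hmulti : Finset.univ.val.map lam = cubeRootMultiset a f + cubeRootMultiset σ g)
    (hsorted : ∀ i j : Fin 6, i ≤ j →
      (lam j).re < (lam i).re ∨ ((lam j).re = (lam i).re ∧ (lam j).im ≤ (lam i).im)) :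
    a = σ ↔
      ((lam 0 = lam 1 ∧ lam 1 = lam 2 ∧ lam 2 = lam 3 ∧ lam 3 = lam 4 ∧ lam 4 = lam 5) ∨
       (lam 0 = lam 1 ∧ lam 1 = lam 2 ∧ lam 2 = lam 3 ∧ lam 3 ≠ lam 4 ∧ lam 4 ≠ lam 5) ∨
       (lam 0 = lam 1 ∧ lam 1 ≠ lam 2 ∧ lam 2 = lam 3 ∧ lam 3 ≠ lam 4 ∧ lam 4 = lam 5)) := by
  have hs : ∀ i j : Fin 6, i ≤ j → CubeRootAux.r (lam i) (lam j) := hsorted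
  constructor
  · intro h
    subst h
    exact CubeRootAux.pattern_of_eq a ha f g lam hmulti hs
  · intro hP
    by_contra hne
    rcases lt_or_gt_of_ne hne with h | h
    · exact CubeRootAux.not_pattern_of_lt σ a ha h g f lam
        (by rw [hmulti, add_comm]) hs hP
    · exact CubeRootAux.not_pattern_of_lt a σ hσ h f g lam hmulti hs hP
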